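/- Let G be a diamond-free graph with maximum clique A = {1,…,ω} and C_{ij} sets defined as usual. Then C_{ij} = ∅ for every j ≥ 4. -/

import Mathlib

open SimpleGraph

/-- `H` occurs as an induced subgraph of `G`. -/
def IsInducedCopy {α β : Type*} (H : SimpleGraph α) (G : SimpleGraph β) : Prop :=
  ∃ f : α ↪ β, ∀ a b : α, G.Adj (f a) (f b) ↔ H.Adj a b

/-- `G` is `H`-free: no induced copy of `H`. -/
def Free {α β : Type*} (G : SimpleGraph α) (H : SimpleGraph β) : Prop :=
  ¬ IsInducedCopy H G

/-- `P₃ ∪ P₂`: disjoint union of a path on 3 vertices and an edge. -/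
def P3UP2 : SimpleGraph (Fin 5) :=
  SimpleGraph.fromRel (fun a b => (a, b) ∈ [((0 : Fin 5), (1 : Fin 5)), (1, 2), (3, 4)])

/-- The diamond: `K₄` minus an edge. -/
def diamondG : SimpleGraph (Fin 4) :=
  SimpleGraph.fromRel (fun a b =>
    (a, b) ∈ [((0 : Fin 4), (2 : Fin 4)), (0, 3), (1, 2), (1, 3), (2, 3)])

/-- `2K₂`: two disjoint edges. -/
def twoK2 : SimpleGraph (Fin 4) :=
  SimpleGraph.fromRel (fun a b => (a, b) ∈ [((0 : Fin 4), (1 : Fin 4)), (2, 3)])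

/-- `P₄ ∪ P₂`. -/
def P4UP2 : SimpleGraph (Fin 6) :=
  SimpleGraph.fromRel (fun a b =>
    (a, b) ∈ [((0 : Fin 6), (1 : Fin 6)), (1, 2), (2, 3), (4, 5)])

/-- The cycle on `n` vertices (for `n ≥ 3`), as a graph on `ZMod n`. -/
def cycG (n : ℕ) : SimpleGraph (ZMod n) :=
  SimpleGraph.fromRel (fun a b => b = a + 1)

/-- A graph is perfect if every induced subgraph has chromatic number
equal to its clique number. -/
def IsPerfect {V : Type*} (G : SimpleGraph V) : Prop :=
  ∀ s : Set V, (G.induce s).chromaticNumber = ((G.induce s).cliqueNum : ℕ∞)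

/-- The set `C_{ij}` attached to a maximum clique enumerated by `f : Fin ω ↪ V`:
vertices outside the clique, non-adjacent to both `f i` and `f j`, where `(i,j)`
is the lexicographically least such pair (this closed form is equivalent to the
iterative definition removing earlier `C`-sets). -/
def Cset {V : Type*} (G : SimpleGraph V) {ω : ℕ} (f : Fin ω ↪ V) (i j : Fin ω) : Set V :=
  {v | v ∉ Set.range f ∧ ¬ G.Adj v (f i) ∧ ¬ G.Adj v (f j) ∧
    ∀ p q : Fin ω, p < q → ¬ G.Adj v (f p) → ¬ G.Adj v (f q) →
      i < p ∨ (i = p ∧ j ≤ q)}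

/-- The set `I_a` attached to a maximum clique enumerated by `f : Fin ω ↪ V`:
vertices outside the clique adjacent to every clique vertex except `f k`. -/
def Iset {V : Type*} (G : SimpleGraph V) {ω : ℕ} (f : Fin ω ↪ V) (k : Fin ω) : Set V :=
  {v | v ∉ Set.range f ∧ ¬ G.Adj v (f k) ∧ ∀ l : Fin ω, l ≠ k → G.Adj v (f l)}

theorem stmt9 {V : Type*} [Fintype V] (G : SimpleGraph V) {ω : ℕ} (f : Fin ω ↪ V)
    (hA : G.IsClique (Set.range f))
    (hmax : ∀ t : Finset V, G.IsClique (t : Set V) → t.card ≤ ω)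
    (hdiam : _root_.Free G diamondG) (i j : Fin ω) (hij : i < j) (hj : 4 ≤ (j : ℕ) + 1) :
    Cset G f i j = ∅ := by
  ext v
  simp only [Set.mem_empty_iff_false, iff_false]
  rintro ⟨hvr, hvi, hvj, hlex⟩
  have hωj : (j : ℕ) < ω := j.isLt
  have hiv : (i : ℕ) < (j : ℕ) := hij
  have hadj : ∀ k : Fin ω, k < j → k ≠ i → G.Adj v (f k) := by
    intro k hk hki
    by_contra hnk
    rcases lt_trichotomy k i with h | h | h
    · rcases hlex k i h hnk hvi with h' | ⟨h', _⟩
      · exact absurd (h.trans h') (lt_irrefl _)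
      · exact hki h'.symm
    · exact hki h
    · rcases hlex i k h hvi hnk with h' | ⟨_, h'⟩
      · exact lt_irrefl _ h'
      · exact absurd hk (not_lt.mpr h')
  have hj3 : 3 ≤ (j : ℕ) := by omega
  set a : ℕ := if (i : ℕ) = 0 then 1 else 0 with ha_def
  set b : ℕ := if (i : ℕ) = 2 then 1 else 2 with hb_def
  have ha2 : a < 3 := by unfold a; split <;> omega
  have hb2 : b < 3 := by unfold b; split <;> omega
  have hai : a ≠ (i : ℕ) := by unfold a; split <;> omega
  have hbi : b ≠ (i : ℕ) := by unfold b; split <;> omega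
  have hab : a ≠ b := by unfold a b; split <;> split <;> omega
  let pa : Fin ω := ⟨a, by omega⟩
  let pb : Fin ω := ⟨b, by omega⟩
  have hva : G.Adj v (f pa) := hadj pa (by simp [Fin.lt_def, pa]; omega) (by
    simp [Fin.ext_iff, pa]; exact hai)
  have hvb : G.Adj v (f pb) := hadj pb (by simp [Fin.lt_def, pb]; omega) (by
    simp [Fin.ext_iff, pb]; exact hbi)
  have hja : G.Adj (f j) (f pa) := hA ⟨j, rfl⟩ ⟨pa, rfl⟩
    (f.injective.ne (by simp [Fin.ext_iff, pa]; omega))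
  have hjb : G.Adj (f j) (f pb) := hA ⟨j, rfl⟩ ⟨pb, rfl⟩
    (f.injective.ne (by simp [Fin.ext_iff, pb]; omega))
  have hab' : G.Adj (f pa) (f pb) := hA ⟨pa, rfl⟩ ⟨pb, rfl⟩
    (f.injective.ne (by simp [Fin.ext_iff, pa, pb]; exact hab))
  have hvne : ∀ k : Fin ω, v ≠ f k := fun k h => hvr ⟨k, h.symm⟩
  have hja' : f j ≠ f pa := hja.ne
  have hjb' : f j ≠ f pb := hjb.ne
  have hab'' : f pa ≠ f pb := hab'.ne
  have hvj' : ¬ G.Adj (f j) v := fun h => hvj h.symm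
  have hvi' : ¬ G.Adj (f i) v := fun h => hvi h.symm
  apply hdiam
  refine ⟨⟨![v, f j, f pa, f pb], ?_⟩, ?_⟩
  · intro x y hxy
    fin_cases x <;> fin_cases y <;>
      simp_all [hvne j, hvne pa, hvne pb, (hvne j).symm, (hvne pa).symm, (hvne pb).symm,
        hja'.symm, hjb'.symm, hab''.symm]
  · intro x y
    show G.Adj (![v, f j, f pa, f pb] x) (![v, f j, f pa, f pb] y) ↔ diamondG.Adj x y
    fin_cases x <;> fin_cases y <;>
      simp_all [diamondG, SimpleGraph.fromRel_adj, hva.symm, hvb.symm, hja.symm, hjb.symm,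
        hab'.symm, hvi', hvj'] <;>
      decide
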